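/- Let φ be a formula of SCL, 𝔄 a suitable model and s a suitable assignment. If Eloise has a winning strategy in the n-bounded evaluation game G_n(𝔄,s,φ) for some n ∈ ℕ, then she has a winning strategy in the unbounded evaluation game G_∞(𝔄,s,φ). -/

import Mathlib

/-
Common formalization of the logics SCL (static computation logic, unbounded
game-theoretic semantics) and BndSCL (bounded semantics), following the paper
"First-order logic with self-reference".

* Games are played on arbitrary (possibly infinite) arenas; plays are maximal
  walks; strategies are functions from finite walks (histories) to positions;
  infinite plays, and finite plays ending at a dead end where `win` holds for
  neither player, are won by nobody.
* The semantic games are formalized with positions carrying the current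
  (sub)formula, an environment binding each label symbol to the labelled
  formula it most recently named (this is the standard closure rendering of
  "reference formula of a claim-symbol occurrence"), the current assignment
  and the polarity (+ = true, − = false).  The bounded game additionally
  carries a clock value.
-/

set_option autoImplicit false

universe u

/-! ## Generic two-player games on (possibly infinite) arenas -/

inductive Player : Type
  | eloise : Player
  | abelard : Player
deriving DecidableEq

def Player.opp : Player → Player
  | .eloise => .abelard
  | .abelard => .eloise

/-- A game arena: an ownership function (corresponding to the partition
`V = V₀ ∪ V₁`), an edge relation, and a predicate telling which player (if
any) wins a play ending at a given dead-end position. -/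
structure GameArena (P : Type u) where
  turn : P → Player
  edge : P → P → Prop
  win : P → Player → Prop

namespace GameArena

variable {P : Type u} (A : GameArena P)

def DeadEnd (u : P) : Prop := ∀ x, ¬ A.edge u x

/-- `w` is a finite nonempty walk whose first element is `v`. -/
def IsWalkFrom (v : P) (w : List P) : Prop :=
  w.head? = some v ∧ List.Chain' A.edge w

/-- A finite (maximal) play from `v`: a walk whose last element is a dead end. -/
def IsFinitePlay (v : P) (w : List P) : Prop :=
  A.IsWalkFrom v w ∧ ∀ u, w.getLast? = some u → A.DeadEnd u

/-- An infinite play from `v`. -/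
def IsInfPlay (v : P) (f : ℕ → P) : Prop :=
  f 0 = v ∧ ∀ n, A.edge (f n) (f (n + 1))

/-- A strategy (a function from histories to positions) of player `pl` is
legal if it always prescribes a move along an edge whenever a move exists. -/
def LegalFor (pl : Player) (v : P) (σ : List P → P) : Prop :=
  ∀ w u, A.IsWalkFrom v w → w.getLast? = some u → A.turn u = pl →
    (∃ x, A.edge u x) → A.edge u (σ w)

/-- The strategy `σ` of player `pl` is followed in the finite play `w`. -/
def FollowsFin (pl : Player) (σ : List P → P) (w : List P) : Prop :=
  ∀ q u x, (q ++ [x]) <+: w → q.getLast? = some u → A.turn u = pl → x = σ q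

/-- The strategy `σ` of player `pl` is followed in the infinite play `f`. -/
def FollowsInf (pl : Player) (σ : List P → P) (f : ℕ → P) : Prop :=
  ∀ n, A.turn (f n) = pl →
    f (n + 1) = σ (List.ofFn fun i : Fin (n + 1) => f i)

/-- `σ` is a winning strategy of player `pl` from `v`: it is legal, every
finite maximal play following it ends in a dead end won by `pl`, and no
infinite play follows it (infinite plays are won by neither player). -/
def WinningStrategy (pl : Player) (v : P) (σ : List P → P) : Prop :=
  A.LegalFor pl v σ ∧
  (∀ w, A.IsFinitePlay v w → A.FollowsFin pl σ w →
      ∃ u, w.getLast? = some u ∧ A.win u pl) ∧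
  (∀ f, A.IsInfPlay v f → ¬ A.FollowsInf pl σ f)

def HasWinningStrategy (pl : Player) (v : P) : Prop :=
  ∃ σ : List P → P, A.WinningStrategy pl v σ

end GameArena

/-- A positional strategy: its moves depend only on the current position. -/
def Positional {P : Type u} (σ : List P → P) : Prop :=
  ∀ q q' : List P, q.getLast? = q'.getLast? → σ q = σ q'

/-! ## Syntax of SCL / BndSCL -/

/-- A purely relational vocabulary. -/
structure Vocab : Type 1 where
  Rel : Type
  arity : Rel → ℕ

/-- Formulas of SCL / BndSCL over the vocabulary `V`.  Variables and label
symbols are natural numbers; `claim L` is the claim symbol `C_L` and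
`lab L φ` is the labelled formula `L φ`. -/
inductive SCLFormula (V : Vocab) : Type
  | bot : SCLFormula V
  | eq (x y : ℕ) : SCLFormula V
  | rel (R : V.Rel) (args : Fin (V.arity R) → ℕ) : SCLFormula V
  | claim (L : ℕ) : SCLFormula V
  | not (φ : SCLFormula V) : SCLFormula V
  | and (φ ψ : SCLFormula V) : SCLFormula V
  | or (φ ψ : SCLFormula V) : SCLFormula V
  | ex (x : ℕ) (φ : SCLFormula V) : SCLFormula V
  | all (x : ℕ) (φ : SCLFormula V) : SCLFormula V
  | lab (L : ℕ) (φ : SCLFormula V) : SCLFormula V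

namespace SCLFormula

variable {V : Vocab}

/-- First-order atoms. -/
def IsFOAtom : SCLFormula V → Prop
  | .bot => True
  | .eq _ _ => True
  | .rel _ _ => True
  | _ => False

/-- Purely first-order formulas (no claim symbols, no label symbols). -/
def IsFO : SCLFormula V → Prop
  | .bot => True
  | .eq _ _ => True
  | .rel _ _ => True
  | .claim _ => False
  | .not φ => IsFO φ
  | .and φ ψ => IsFO φ ∧ IsFO ψ
  | .or φ ψ => IsFO φ ∧ IsFO ψ
  | .ex _ φ => IsFO φ
  | .all _ φ => IsFO φ
  | .lab _ _ => False

/-- Free (individual) variables. -/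
def freeVars : SCLFormula V → Finset ℕ
  | .bot => ∅
  | .eq x y => {x, y}
  | .rel _ a => Finset.image a Finset.univ
  | .claim _ => ∅
  | .not φ => freeVars φ
  | .and φ ψ => freeVars φ ∪ freeVars ψ
  | .or φ ψ => freeVars φ ∪ freeVars ψ
  | .ex x φ => freeVars φ \ {x}
  | .all x φ => freeVars φ \ {x}
  | .lab _ φ => freeVars φ

/-- All variables occurring in a formula (free or bound). -/
def vars : SCLFormula V → Finset ℕ
  | .bot => ∅
  | .eq x y => {x, y}
  | .rel _ a => Finset.image a Finset.univ
  | .claim _ => ∅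
  | .not φ => vars φ
  | .and φ ψ => vars φ ∪ vars ψ
  | .or φ ψ => vars φ ∪ vars ψ
  | .ex x φ => insert x (vars φ)
  | .all x φ => insert x (vars φ)
  | .lab _ φ => vars φ

/-- Sentences: formulas with no free variables. -/
def IsSentence (φ : SCLFormula V) : Prop := freeVars φ = ∅

end SCLFormula

/-! ## Structures and first-order (Tarski) satisfaction -/

/-- A (suitable) model for vocabulary `V`: a nonempty domain together with an
interpretation of all relation symbols. -/
structure Struct (V : Vocab) where
  Dom : Type u
  dom_nonempty : Nonempty Dom
  interp : ∀ R : V.Rel, (Fin (V.arity R) → Dom) → Prop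

attribute [instance] Struct.dom_nonempty

/-- Satisfaction of atoms (false on non-atoms). -/
def atomSat {V : Vocab} (M : Struct.{u} V) (s : ℕ → M.Dom) : SCLFormula V → Prop
  | .bot => False
  | .eq x y => s x = s y
  | .rel R a => M.interp R fun i => s (a i)
  | _ => False

/-- Standard (Tarski) first-order satisfaction.  It is only meaningful on
purely first-order formulas; claim symbols are interpreted as `False` and
label symbols are ignored. -/
def FOSat {V : Vocab} (M : Struct.{u} V) : (ℕ → M.Dom) → SCLFormula V → Prop
  | _, .bot => False
  | s, .eq x y => s x = s y
  | s, .rel R a => M.interp R fun i => s (a i)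
  | _, .claim _ => False
  | s, .not φ => ¬ FOSat M s φ
  | s, .and φ ψ => FOSat M s φ ∧ FOSat M s ψ
  | s, .or φ ψ => FOSat M s φ ∨ FOSat M s ψ
  | s, .ex x φ => ∃ a : M.Dom, FOSat M (Function.update s x a) φ
  | s, .all x φ => ∀ a : M.Dom, FOSat M (Function.update s x a) φ
  | s, .lab _ φ => FOSat M s φ

/-! ## The evaluation games -/

/-- A position of the semantic game: the current formula, the environment
recording for each label symbol `L` the reference formula `L ψ` it currently
names, the current assignment, and the polarity (`true` = `+`). -/
structure SCLPos (V : Vocab) (D : Type u) : Type u where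
  form : SCLFormula V
  env : ℕ → Option (SCLFormula V)
  asg : ℕ → D
  pol : Bool

/-- Which player moves at a given position. (At positions with at most one
successor the owner is irrelevant; we let Eloise own them.) -/
def posTurn {V : Vocab} {D : Type u} (p : SCLPos V D) : Player :=
  match p.form, p.pol with
  | .and _ _, true => .abelard
  | .and _ _, false => .eloise
  | .or _ _, true => .eloise
  | .or _ _, false => .abelard
  | .all _ _, true => .abelard
  | .all _ _, false => .eloise
  | .ex _ _, true => .eloise
  | .ex _ _, false => .abelard
  | _, _ => .eloise

/-- Who wins a play ending at a given position: at an FO-atom position,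
Eloise wins iff the atom's truth value agrees with the polarity, and Abelard
wins otherwise; plays ending anywhere else (e.g. at a claim symbol with no
reference formula, or with clock value 0) are won by neither player. -/
def posWin {V : Vocab} (M : Struct.{u} V) (p : SCLPos V M.Dom) : Player → Prop
  | .eloise => p.form.IsFOAtom ∧ (atomSat M p.asg p.form ↔ p.pol = true)
  | .abelard => p.form.IsFOAtom ∧ ¬ (atomSat M p.asg p.form ↔ p.pol = true)

/-- Moves of the unbounded evaluation game `G_∞`. -/
inductive UStep {V : Vocab} (M : Struct.{u} V) :
    SCLPos V M.Dom → SCLPos V M.Dom → Prop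
  | neg (φ : SCLFormula V) (e : ℕ → Option (SCLFormula V)) (s : ℕ → M.Dom) (b : Bool) :
      UStep M ⟨.not φ, e, s, b⟩ ⟨φ, e, s, !b⟩
  | andLeft (φ ψ : SCLFormula V) (e : ℕ → Option (SCLFormula V)) (s : ℕ → M.Dom) (b : Bool) :
      UStep M ⟨.and φ ψ, e, s, b⟩ ⟨φ, e, s, b⟩
  | andRight (φ ψ : SCLFormula V) (e : ℕ → Option (SCLFormula V)) (s : ℕ → M.Dom) (b : Bool) :
      UStep M ⟨.and φ ψ, e, s, b⟩ ⟨ψ, e, s, b⟩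
  | orLeft (φ ψ : SCLFormula V) (e : ℕ → Option (SCLFormula V)) (s : ℕ → M.Dom) (b : Bool) :
      UStep M ⟨.or φ ψ, e, s, b⟩ ⟨φ, e, s, b⟩
  | orRight (φ ψ : SCLFormula V) (e : ℕ → Option (SCLFormula V)) (s : ℕ → M.Dom) (b : Bool) :
      UStep M ⟨.or φ ψ, e, s, b⟩ ⟨ψ, e, s, b⟩
  | exStep (x : ℕ) (φ : SCLFormula V) (e : ℕ → Option (SCLFormula V)) (s : ℕ → M.Dom)
      (b : Bool) (a : M.Dom) :
      UStep M ⟨.ex x φ, e, s, b⟩ ⟨φ, e, Function.update s x a, b⟩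
  | allStep (x : ℕ) (φ : SCLFormula V) (e : ℕ → Option (SCLFormula V)) (s : ℕ → M.Dom)
      (b : Bool) (a : M.Dom) :
      UStep M ⟨.all x φ, e, s, b⟩ ⟨φ, e, Function.update s x a, b⟩
  | labStep (L : ℕ) (φ : SCLFormula V) (e : ℕ → Option (SCLFormula V)) (s : ℕ → M.Dom)
      (b : Bool) :
      UStep M ⟨.lab L φ, e, s, b⟩ ⟨φ, Function.update e L (some (.lab L φ)), s, b⟩
  | claimStep (L : ℕ) (e : ℕ → Option (SCLFormula V)) (s : ℕ → M.Dom) (b : Bool)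
      (χ : SCLFormula V) (h : e L = some χ) :
      UStep M ⟨.claim L, e, s, b⟩ ⟨χ, e, s, b⟩

/-- Moves of the `n`-bounded evaluation game: positions additionally carry a
clock value, which decreases by one exactly at jumps from a claim symbol to
its reference formula; a claim-symbol position with clock value `0` is a dead
end won by neither player. -/
inductive BStep {V : Vocab} (M : Struct.{u} V) :
    SCLPos V M.Dom × ℕ → SCLPos V M.Dom × ℕ → Prop
  | neg (φ : SCLFormula V) (e : ℕ → Option (SCLFormula V)) (s : ℕ → M.Dom) (b : Bool) (n : ℕ) :
      BStep M (⟨.not φ, e, s, b⟩, n) (⟨φ, e, s, !b⟩, n)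
  | andLeft (φ ψ : SCLFormula V) (e : ℕ → Option (SCLFormula V)) (s : ℕ → M.Dom) (b : Bool)
      (n : ℕ) : BStep M (⟨.and φ ψ, e, s, b⟩, n) (⟨φ, e, s, b⟩, n)
  | andRight (φ ψ : SCLFormula V) (e : ℕ → Option (SCLFormula V)) (s : ℕ → M.Dom) (b : Bool)
      (n : ℕ) : BStep M (⟨.and φ ψ, e, s, b⟩, n) (⟨ψ, e, s, b⟩, n)
  | orLeft (φ ψ : SCLFormula V) (e : ℕ → Option (SCLFormula V)) (s : ℕ → M.Dom) (b : Bool)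
      (n : ℕ) : BStep M (⟨.or φ ψ, e, s, b⟩, n) (⟨φ, e, s, b⟩, n)
  | orRight (φ ψ : SCLFormula V) (e : ℕ → Option (SCLFormula V)) (s : ℕ → M.Dom) (b : Bool)
      (n : ℕ) : BStep M (⟨.or φ ψ, e, s, b⟩, n) (⟨ψ, e, s, b⟩, n)
  | exStep (x : ℕ) (φ : SCLFormula V) (e : ℕ → Option (SCLFormula V)) (s : ℕ → M.Dom)
      (b : Bool) (n : ℕ) (a : M.Dom) :
      BStep M (⟨.ex x φ, e, s, b⟩, n) (⟨φ, e, Function.update s x a, b⟩, n)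
  | allStep (x : ℕ) (φ : SCLFormula V) (e : ℕ → Option (SCLFormula V)) (s : ℕ → M.Dom)
      (b : Bool) (n : ℕ) (a : M.Dom) :
      BStep M (⟨.all x φ, e, s, b⟩, n) (⟨φ, e, Function.update s x a, b⟩, n)
  | labStep (L : ℕ) (φ : SCLFormula V) (e : ℕ → Option (SCLFormula V)) (s : ℕ → M.Dom)
      (b : Bool) (n : ℕ) :
      BStep M (⟨.lab L φ, e, s, b⟩, n) (⟨φ, Function.update e L (some (.lab L φ)), s, b⟩, n)
  | claimStep (L : ℕ) (e : ℕ → Option (SCLFormula V)) (s : ℕ → M.Dom) (b : Bool)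
      (χ : SCLFormula V) (n : ℕ) (h : e L = some χ) :
      BStep M (⟨.claim L, e, s, b⟩, n + 1) (⟨χ, e, s, b⟩, n)

/-- The unbounded evaluation game `G_∞(𝔄, ·, ·)` as a game arena. -/
def gameU {V : Vocab} (M : Struct.{u} V) : GameArena (SCLPos V M.Dom) where
  turn := posTurn
  edge := UStep M
  win := posWin M

/-- The bounded evaluation games `G_n(𝔄, ·, ·)` (for all clock values `n`
simultaneously) as a game arena. -/
def gameB {V : Vocab} (M : Struct.{u} V) : GameArena (SCLPos V M.Dom × ℕ) where
  turn p := posTurn p.1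
  edge := BStep M
  win p := posWin M p.1

/-- The initial position of the evaluation game for `φ` under assignment `s`:
empty environment and positive polarity. -/
def initPos {V : Vocab} {D : Type u} (φ : SCLFormula V) (s : ℕ → D) : SCLPos V D :=
  ⟨φ, fun _ => none, s, true⟩

/-- Truth under the unbounded semantics (the logic SCL):
`𝔄,s ⊨ φ` iff Eloise has a winning strategy in `G_∞(𝔄,s,φ)`. -/
def SCLTrue {V : Vocab} (M : Struct.{u} V) (s : ℕ → M.Dom) (φ : SCLFormula V) : Prop :=
  (gameU M).HasWinningStrategy .eloise (initPos φ s)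

/-! ### The bounded game `G_ω` -/

/-- Positions of the game `G_ω`: the initial position (where Abelard picks a
number `n'`), the intermediate positions (where Eloise picks some `n ≥ n'`),
and the positions of the `n`-bounded games. -/
inductive GOPos (V : Vocab) (D : Type u) : Type u
  | start : GOPos V D
  | mid (n' : ℕ) : GOPos V D
  | inner (p : SCLPos V D) (clock : ℕ) : GOPos V D

inductive GOStep {V : Vocab} (M : Struct.{u} V) (φ : SCLFormula V) (s : ℕ → M.Dom) :
    GOPos V M.Dom → GOPos V M.Dom → Prop
  | abelardPick (n' : ℕ) : GOStep M φ s .start (.mid n')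
  | eloisePick (n' n : ℕ) (h : n' ≤ n) : GOStep M φ s (.mid n') (.inner (initPos φ s) n)
  | play (p q : SCLPos V M.Dom) (m k : ℕ) (h : BStep M (p, m) (q, k)) :
      GOStep M φ s (.inner p m) (.inner q k)

def goTurn {V : Vocab} {D : Type u} : GOPos V D → Player
  | .start => .abelard
  | .mid _ => .eloise
  | .inner p _ => posTurn p

def goWin {V : Vocab} (M : Struct.{u} V) : GOPos V M.Dom → Player → Prop
  | .inner p _, pl => posWin M p pl
  | _, _ => False

/-- The bounded evaluation game `G_ω(𝔄,s,φ)`: Abelard picks `n' ∈ ℕ`, then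
Eloise picks `n ≥ n'`, and then `G_n(𝔄,s,φ)` is played. -/
def gameOmega {V : Vocab} (M : Struct.{u} V) (φ : SCLFormula V) (s : ℕ → M.Dom) :
    GameArena (GOPos V M.Dom) where
  turn := goTurn
  edge := GOStep M φ s
  win := goWin M

/-- Truth under the bounded semantics (the logic BndSCL):
`𝔄,s ⊨_ω φ` iff Eloise has a winning strategy in `G_ω(𝔄,s,φ)`. -/
def BndTrue {V : Vocab} (M : Struct.{u} V) (s : ℕ → M.Dom) (φ : SCLFormula V) : Prop :=
  (gameOmega M φ s).HasWinningStrategy .eloise .start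

/-! ## Approximants -/

/-- Auxiliary structural recursion for approximants: `k` tells what to put in
place of a claim symbol.  Label symbols are deleted (while updating the
environment), and polarity is tracked through negations. -/
def approxCore {V : Vocab}
    (k : (ℕ → Option (SCLFormula V)) → Bool → ℕ → SCLFormula V) :
    (ℕ → Option (SCLFormula V)) → Bool → SCLFormula V → SCLFormula V
  | _, _, .bot => .bot
  | _, _, .eq x y => .eq x y
  | _, _, .rel R a => .rel R a
  | e, b, .claim L => k e b L
  | e, b, .not φ => .not (approxCore k e (!b) φ)
  | e, b, .and φ ψ => .and (approxCore k e b φ) (approxCore k e b ψ)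
  | e, b, .or φ ψ => .or (approxCore k e b φ) (approxCore k e b ψ)
  | e, b, .ex x φ => .ex x (approxCore k e b φ)
  | e, b, .all x φ => .all x (approxCore k e b φ)
  | e, b, .lab L φ => approxCore k (Function.update e L (some (.lab L φ))) b φ

/-- `approx n e b φ` unfolds each claim symbol of `φ` (in environment `e`,
under polarity `b`) through `n` jumps to reference formulas; claim symbols
reached with exhausted budget (or with no reference formula) are replaced by
`⊥` at positive occurrences and `⊤` (i.e. `¬⊥`) at negative occurrences, and
all label symbols are deleted. -/
def approx {V : Vocab} : ℕ → (ℕ → Option (SCLFormula V)) → Bool → SCLFormula V → SCLFormula V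
  | 0 => approxCore fun _ b _ => if b then .bot else .not .bot
  | n + 1 => approxCore fun e b L =>
      match e L with
      | some χ => approx n e b χ
      | none => if b then .bot else .not .bot

/-- The `n`-th approximant `Φⁿ_φ` of `φ`: the first-order formula obtained
from the `n`-th unfolding of `φ` by deleting all label symbols and replacing
positive claim occurrences by `⊥` and negative ones by `⊤`. -/
def approximant {V : Vocab} (φ : SCLFormula V) (n : ℕ) : SCLFormula V :=
  approx n (fun _ => none) true φ

/-! ### Auxiliary development for Statement 13 -/

section Stmt13

variable {V : Vocab} {M : Struct.{u} V}

/-- The clock value at the next position, given clock `m` at position `p`. -/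
def nextClock {D : Type u} (m : ℕ) (p : SCLPos V D) : ℕ :=
  match p.form with
  | .claim _ => m - 1
  | _ => m

/-- Annotate a list of positions with clock values, starting from clock `m`. -/
def ann {D : Type u} : ℕ → List (SCLPos V D) → List (SCLPos V D × ℕ)
  | _, [] => []
  | m, p :: w => (p, m) :: ann (nextClock m p) w

/-- The clock value after playing through `w` starting with clock `m`. -/
def clockEnd {D : Type u} : ℕ → List (SCLPos V D) → ℕ
  | m, [] => m
  | m, p :: w => clockEnd (nextClock m p) w

lemma ann_append {D : Type u} (m : ℕ) (w₁ w₂ : List (SCLPos V D)) :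
    ann m (w₁ ++ w₂) = ann m w₁ ++ ann (clockEnd m w₁) w₂ := by
  induction w₁ generalizing m with
  | nil => simp [ann, clockEnd]
  | cons p w ih => simp [ann, clockEnd, ih]

lemma clockEnd_append {D : Type u} (m : ℕ) (w₁ w₂ : List (SCLPos V D)) :
    clockEnd m (w₁ ++ w₂) = clockEnd (clockEnd m w₁) w₂ := by
  induction w₁ generalizing m with
  | nil => simp [clockEnd]
  | cons p w ih => simp [clockEnd, ih]

lemma ann_head? {D : Type u} (m : ℕ) (w : List (SCLPos V D)) :
    (ann m w).head? = w.head?.map (fun p => (p, m)) := by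
  cases w <;> simp [ann]

lemma ofFn_concat {α : Type*} (f : ℕ → α) (k : ℕ) :
    (List.ofFn fun i : Fin (k + 1) => f i) = (List.ofFn fun i : Fin k => f i) ++ [f k] := by
  rw [List.ofFn_succ']
  simp [List.concat_eq_append]

lemma ofFn_getLast? {α : Type*} (f : ℕ → α) (k : ℕ) :
    (List.ofFn fun i : Fin (k + 1) => f i).getLast? = some (f k) := by
  rw [ofFn_concat, List.getLast?_concat]

lemma bstep_ustep {p q : SCLPos V M.Dom} {m k : ℕ}
    (h : BStep M (p, m) (q, k)) : UStep M p q := by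
  cases h with
  | neg φ e s b n => exact UStep.neg φ e s b
  | andLeft φ ψ e s b n => exact UStep.andLeft φ ψ e s b
  | andRight φ ψ e s b n => exact UStep.andRight φ ψ e s b
  | orLeft φ ψ e s b n => exact UStep.orLeft φ ψ e s b
  | orRight φ ψ e s b n => exact UStep.orRight φ ψ e s b
  | exStep x φ e s b n a => exact UStep.exStep x φ e s b a
  | allStep x φ e s b n a => exact UStep.allStep x φ e s b a
  | labStep L φ e s b n => exact UStep.labStep L φ e s b
  | claimStep L e s b χ n hχ => exact UStep.claimStep L e s b χ hχ

lemma bstep_clock {p q : SCLPos V M.Dom} {m k : ℕ}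
    (h : BStep M (p, m) (q, k)) : k = nextClock m p := by
  cases h <;> simp [nextClock]

lemma ustep_bstep {p q : SCLPos V M.Dom} {m : ℕ} (h : UStep M p q)
    (hm : ∀ L, p.form = SCLFormula.claim L → 1 ≤ m) :
    BStep M (p, m) (q, nextClock m p) := by
  cases h with
  | neg φ e s b => exact BStep.neg φ e s b m
  | andLeft φ ψ e s b => exact BStep.andLeft φ ψ e s b m
  | andRight φ ψ e s b => exact BStep.andRight φ ψ e s b m
  | orLeft φ ψ e s b => exact BStep.orLeft φ ψ e s b m
  | orRight φ ψ e s b => exact BStep.orRight φ ψ e s b m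
  | exStep x φ e s b a => exact BStep.exStep x φ e s b m a
  | allStep x φ e s b a => exact BStep.allStep x φ e s b m a
  | labStep L φ e s b => exact BStep.labStep L φ e s b m
  | claimStep L e s b χ hχ =>
      obtain ⟨m', rfl⟩ : ∃ m', m = m' + 1 :=
        ⟨m - 1, (Nat.succ_pred_eq_of_pos (hm L rfl)).symm⟩
      exact BStep.claimStep L e s b χ m' hχ

lemma claim_zero_deadend {L : ℕ} {e : ℕ → Option (SCLFormula V)} {s : ℕ → M.Dom} {b : Bool} :
    (gameB M).DeadEnd (⟨.claim L, e, s, b⟩, 0) := by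
  rintro ⟨x, k⟩ hx
  cases hx

lemma not_posWin_claim {L : ℕ} {e : ℕ → Option (SCLFormula V)} {s : ℕ → M.Dom} {b : Bool} :
    ¬ posWin M ⟨.claim L, e, s, b⟩ .eloise := by
  rintro ⟨h, -⟩
  exact h

instance : Nonempty (SCLPos V M.Dom) := by
  obtain ⟨d⟩ := M.dom_nonempty
  exact ⟨⟨.bot, fun _ => none, fun _ => d, true⟩⟩

open Classical

/-- Eloise's strategy in `G_∞` obtained from a strategy `σB` of `G_n`. -/
noncomputable def sigU (n : ℕ) (σB : List (SCLPos V M.Dom × ℕ) → SCLPos V M.Dom × ℕ)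
    (w : List (SCLPos V M.Dom)) : SCLPos V M.Dom :=
  if _ : ∃ u, w.getLast? = some u ∧ UStep M u (σB (ann n w)).1 then (σB (ann n w)).1
  else if h₂ : ∃ x, ∃ u, w.getLast? = some u ∧ UStep M u x then h₂.choose
  else Classical.arbitrary _

lemma sigU_legal (n : ℕ) (σB : List (SCLPos V M.Dom × ℕ) → SCLPos V M.Dom × ℕ)
    (v : SCLPos V M.Dom) : (gameU M).LegalFor .eloise v (sigU n σB) := by
  intro w u _ hlast _ hex
  unfold sigU
  split_ifs with h₁ h₂
  · obtain ⟨u', hu', hstep⟩ := h₁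
    rw [hlast] at hu'
    cases hu'
    exact hstep
  · obtain ⟨u', hu', hstep⟩ := h₂.choose_spec
    rw [hlast] at hu'
    cases hu'
    exact hstep
  · exact absurd ⟨hex.choose, u, hlast, hex.choose_spec⟩ h₂

/-- The key invariant: along any play of `G_∞` from `v` that follows `sigU n σB`,
the clock-annotated history is a play of the bounded game from `(v, n)` that
follows `σB`. -/
lemma key_invariant (n : ℕ) (σB : List (SCLPos V M.Dom × ℕ) → SCLPos V M.Dom × ℕ)
    (v : SCLPos V M.Dom)
    (hwin : (gameB M).WinningStrategy .eloise (v, n) σB) :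
    ∀ w, (gameU M).IsWalkFrom v w →
      (gameU M).FollowsFin .eloise (sigU n σB) w →
      (gameB M).IsWalkFrom (v, n) (ann n w) ∧
      (gameB M).FollowsFin .eloise σB (ann n w) := by
  intro w
  induction w using List.reverseRecOn with
  | nil => intro hw _; simp [GameArena.IsWalkFrom] at hw
  | append_singleton w u ih =>
    intro hw' hf'
    rcases eq_or_ne w [] with rfl | hne
    · -- singleton case
      have hv : u = v := by simpa [GameArena.IsWalkFrom] using hw'.1
      subst hv
      constructor
      · constructor
        · simp [ann]
        · exact List.isChain_singleton _
      · intro q p x hpre hqlast _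
        have hq : q = [] := by
          have := hpre.length_le
          simpa [ann] using this
        subst hq
        simp at hqlast
    · -- w nonempty
      obtain ⟨u₀, hu₀⟩ : ∃ u₀, w.getLast? = some u₀ := by
        have := (List.getLast?_isSome (l := w)).mpr hne
        exact Option.isSome_iff_exists.mp this
      obtain ⟨w', rfl⟩ : ∃ w', w = w' ++ [u₀] := List.getLast?_eq_some_iff.mp hu₀
      set w := w' ++ [u₀] with hwdef
      have hwwalk : (gameU M).IsWalkFrom v w := by
        obtain ⟨hh, hc⟩ := hw'
        refine ⟨?_, (List.isChain_append.mp hc).1⟩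
        rw [← hh]
        simp [hwdef]
      have hwfollow : (gameU M).FollowsFin .eloise (sigU n σB) w := by
        intro q p x hpre hql ht
        exact hf' q p x (hpre.trans (List.prefix_append _ _)) hql ht
      obtain ⟨hBwalk, hBfollow⟩ := ih hwwalk hwfollow
      have hedgeU : UStep M u₀ u := by
        obtain ⟨-, hc⟩ := hw'
        have := (List.isChain_append.mp hc).2.2
        exact this u₀ hu₀ u rfl
      set m : ℕ := clockEnd n w' with hm
      have hannlast : (ann n w).getLast? = some (u₀, m) := by
        rw [hwdef, ann_append]
        simp [ann, hm]
      have hannw : ann n (w ++ [u]) = ann n w ++ [(u, nextClock m u₀)] := by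
        rw [ann_append]
        have : clockEnd n w = nextClock m u₀ := by
          rw [hwdef, clockEnd_append]; simp [clockEnd, hm]
        rw [this]
        simp [ann]
      -- the clock is positive at claim positions
      have hpos : ∀ L, u₀.form = SCLFormula.claim L → 1 ≤ m := by
        intro L hL
        by_contra hlt
        have hm0 : m = 0 := by omega
        obtain ⟨fm, e₀, s₀, b₀⟩ := u₀
        simp at hL
        subst hL
        have hdead : (gameB M).DeadEnd ((⟨.claim L, e₀, s₀, b₀⟩ : SCLPos V M.Dom), m) := by
          rw [hm0]; exact claim_zero_deadend
        have hplay : (gameB M).IsFinitePlay (v, n) (ann n w) := by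
          refine ⟨hBwalk, ?_⟩
          intro p hp
          rw [hannlast] at hp
          cases hp
          exact hdead
        obtain ⟨p, hp, hpwin⟩ := hwin.2.1 _ hplay hBfollow
        rw [hannlast] at hp
        cases hp
        exact not_posWin_claim hpwin
      have hedgeB : BStep M (u₀, m) (u, nextClock m u₀) := ustep_bstep hedgeU hpos
      constructor
      · -- walk
        refine ⟨?_, ?_⟩
        · rw [hannw]
          rw [List.head?_append_of_ne_nil]
          · exact hBwalk.1
          · intro hnil
            have : ((ann n w).head?).isSome = true := by
              rw [hBwalk.1]; rfl
            rw [hnil] at this; simp at this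
        · rw [hannw]
          change List.IsChain _ _; rw [List.isChain_append]
          refine ⟨hBwalk.2, List.isChain_singleton _, ?_⟩
          intro x hx y hy
          rw [hannlast] at hx
          simp at hx hy
          subst hx; subst hy
          exact hedgeB
      · -- follows
        intro q p x hpre hql ht
        rw [hannw] at hpre
        rcases List.prefix_concat_iff.mp hpre with heq | hpre'
        · obtain ⟨hq, hx⟩ := List.append_inj' heq rfl
          subst hq
          cases hx
          -- x is the new element; p is (u₀, m)
          rw [hannlast] at hql
          cases hql
          -- turn at u₀ is Eloise's
          have hturn : posTurn u₀ = Player.eloise := ht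
          -- there is a B-successor of (u₀, m), so σB is legal here
          have hσlegal : BStep M (u₀, m) (σB (ann n w)) := by
            have := hwin.1 (ann n w) (u₀, m) hBwalk hannlast hturn
              ⟨(u, nextClock m u₀), hedgeB⟩
            exact this
          -- hence sigU picks exactly the σB-move
          have hsig : sigU n σB w = (σB (ann n w)).1 := by
            unfold sigU
            rw [dif_pos]
            exact ⟨u₀, hu₀, by
              have := bstep_ustep (p := u₀) (q := (σB (ann n w)).1) (m := m)
                (k := (σB (ann n w)).2) (by simpa using hσlegal)
              exact this⟩
          have hu_eq : u = sigU n σB w :=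
            hf' w u₀ u (by exact List.prefix_refl _) hu₀ hturn
          have hclock : (σB (ann n w)).2 = nextClock m u₀ :=
            bstep_clock (p := u₀) (q := (σB (ann n w)).1) (by simpa using hσlegal)
          have : σB (ann n w) = (u, nextClock m u₀) := by
            rw [hu_eq, hsig]
            exact Prod.ext rfl hclock
          exact this.symm
        · exact hBfollow q p x hpre' hql ht

lemma followsInf_ofFn {P : Type u} (A : GameArena P) (pl : Player)
    (σ : List P → P) (f : ℕ → P) (hF : A.FollowsInf pl σ f) (k : ℕ) :
    A.FollowsFin pl σ (List.ofFn fun i : Fin k => f i) := by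
  induction k with
  | zero => intro q p x hpre _ _; simp at hpre
  | succ k ih =>
    intro q p x hpre hql ht
    have hconcat : (List.ofFn fun i : Fin (k + 1) => f i)
        = (List.ofFn fun i : Fin k => f i) ++ [f k] := by
      rw [List.ofFn_succ']
      simp [List.concat_eq_append]
    rw [hconcat] at hpre
    rcases List.prefix_concat_iff.mp hpre with heq | hpre'
    · obtain ⟨hq, hx⟩ := List.append_inj' heq rfl
      subst hq
      cases hx
      -- q = ofFn k, nonempty since hql
      rcases Nat.eq_zero_or_pos k with rfl | hk
      · simp at hql
      · obtain ⟨k', rfl⟩ : ∃ k', k = k' + 1 := ⟨k - 1, by omega⟩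
        have hlastq : (List.ofFn fun i : Fin (k' + 1) => f i).getLast? = some (f k') := by
          rw [List.ofFn_succ']
          simp [List.concat_eq_append]
        rw [hlastq] at hql
        cases hql
        have := hF k' ht
        rw [this]
    · exact ih q p x hpre' hql ht

lemma ofFn_walk {P : Type u} (A : GameArena P) (f : ℕ → P)
    (hf : ∀ i, A.edge (f i) (f (i + 1))) (k : ℕ) :
    A.IsWalkFrom (f 0) (List.ofFn fun i : Fin (k + 1) => f i) := by
  constructor
  · rw [List.ofFn_succ]; rfl
  · induction k with
    | zero => exact List.isChain_singleton _
    | succ k ih =>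
      have hconcat : (List.ofFn fun i : Fin (k + 2) => f i)
          = (List.ofFn fun i : Fin (k + 1) => f i) ++ [f (k + 1)] := by
        rw [List.ofFn_succ']
        simp [List.concat_eq_append]
      rw [hconcat]; change List.IsChain _ _; rw [List.isChain_append]
      refine ⟨ih, List.isChain_singleton _, ?_⟩
      intro x hx y hy
      have hlastq : (List.ofFn fun i : Fin (k + 1) => f i).getLast? = some (f k) := by
        rw [List.ofFn_succ']
        simp [List.concat_eq_append]
      rw [hlastq] at hx
      simp at hx hy
      subst hx; subst hy
      exact hf k

end Stmt13

/-- If Eloise has a winning strategy in the `n`-bounded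
evaluation game `G_n(𝔄,s,φ)` for some `n ∈ ℕ`, then she has a winning
strategy in the unbounded evaluation game `G_∞(𝔄,s,φ)`. -/
theorem bounded_win_implies_unbounded_win {V : Vocab} (φ : SCLFormula V)
    (M : Struct.{u} V) (s : ℕ → M.Dom) (n : ℕ)
    (h : (gameB M).HasWinningStrategy .eloise (initPos φ s, n)) :
    (gameU M).HasWinningStrategy .eloise (initPos φ s) := by
  obtain ⟨σB, hwin⟩ := h
  refine ⟨sigU n σB, sigU_legal n σB _, ?_, ?_⟩
  · -- finite maximal plays following sigU are won by Eloise
    rintro w ⟨hwalk, hdead⟩ hfollow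
    obtain ⟨hBwalk, hBfollow⟩ := key_invariant n σB _ hwin w hwalk hfollow
    have hne : w ≠ [] := by
      intro hnil; rw [hnil] at hwalk; simp [GameArena.IsWalkFrom] at hwalk
    obtain ⟨u, hu⟩ : ∃ u, w.getLast? = some u :=
      Option.isSome_iff_exists.mp ((List.getLast?_isSome (l := w)).mpr hne)
    obtain ⟨w', rfl⟩ : ∃ w', w = w' ++ [u] := List.getLast?_eq_some_iff.mp hu
    have hannlast : (ann n (w' ++ [u])).getLast? = some (u, clockEnd n w') := by
      rw [ann_append]; simp [ann]
    have hUdead : (gameU M).DeadEnd u := hdead u hu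
    have hBdead : (gameB M).DeadEnd (u, clockEnd n w') := by
      rintro ⟨x, k⟩ hx
      exact hUdead x (bstep_ustep hx)
    have hBplay : (gameB M).IsFinitePlay (initPos φ s, n) (ann n (w' ++ [u])) := by
      refine ⟨hBwalk, ?_⟩
      intro p hp
      rw [hannlast] at hp
      cases hp
      exact hBdead
    obtain ⟨p, hp, hpwin⟩ := hwin.2.1 _ hBplay hBfollow
    rw [hannlast] at hp
    cases hp
    exact ⟨u, hu, hpwin⟩
  · -- no infinite play follows sigU
    rintro f ⟨h0, hedges⟩ hfol
    set F : ℕ → SCLPos V M.Dom × ℕ :=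
      fun k => (f k, clockEnd n (List.ofFn fun i : Fin k => f i)) with hF
    have hannOfFn : ∀ k, ann n (List.ofFn fun i : Fin k => f i)
        = List.ofFn fun i : Fin k => F i := by
      intro k
      induction k with
      | zero => simp [ann]
      | succ k ih =>
        rw [ofFn_concat f k, ofFn_concat F k, ann_append, ih]
        simp [ann, hF]
    have hkey : ∀ k, (gameB M).IsWalkFrom (initPos φ s, n)
          (List.ofFn fun i : Fin (k + 1) => F i) ∧
        (gameB M).FollowsFin .eloise σB (List.ofFn fun i : Fin (k + 1) => F i) := by
      intro k
      have hwalk : (gameU M).IsWalkFrom (initPos φ s)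
          (List.ofFn fun i : Fin (k + 1) => f i) := by
        have := ofFn_walk (gameU M) f hedges k
        rwa [h0] at this
      have hfin := followsInf_ofFn (gameU M) .eloise (sigU n σB) f hfol (k + 1)
      have := key_invariant n σB _ hwin _ hwalk hfin
      rwa [hannOfFn (k + 1)] at this
    have hFinf : (gameB M).IsInfPlay (initPos φ s, n) F := by
      constructor
      · simp [hF, h0, clockEnd]
      · intro k
        have := (hkey (k + 1)).1.2
        rw [ofFn_concat F (k + 1)] at this; change List.IsChain _ _ at this; rw [List.isChain_append] at this
        exact this.2.2 (F k) (by rw [ofFn_getLast?]; rfl) (F (k + 1)) rfl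
    have hFfol : (gameB M).FollowsInf .eloise σB F := by
      intro k ht
      have := (hkey (k + 1)).2 (List.ofFn fun i : Fin (k + 1) => F i) (F k) (F (k + 1))
        (by rw [ofFn_concat F (k + 1)]) (by rw [ofFn_getLast?]) ht
      exact this
    exact hwin.2.2 F hFinf hFfol
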